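/- In the free group F₂ on g and h, let v be any word in which g^{±1} alternates with powers of h (each h-power having nonzero exponent). Then for any integer p with |p| ≥ 2, in the reduced form of the product v · gᵖ (or gᵖ · v⁻¹), at least one letter g of the power gᵖ remains; i.e., a word of this alternating form can never cancel a power gᵖ with |p| ≥ 2 entirely. -/

import Mathlib

/-!
Statement 19: in the free group `F₂` on `g, h`, if `v` is a word in which `g^{±1}`
alternates with nonzero powers of `h` (encoded: no two consecutive letters of the
reduced word are `g`-letters), and `p : ℤ` with `|p| ≥ 2`, then in the reduced form of
`v * gᵖ` at least one letter of the power `gᵖ` survives — the last letter of the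
reduced word is `g^{sign p}` — and likewise the first letter of the reduced form of
`gᵖ * v⁻¹` is `g^{sign p}`.
-/

namespace Stmt19

abbrev F2 := FreeGroup (Fin 2)

def g : F2 := FreeGroup.of 0
def h : F2 := FreeGroup.of 1

lemma reduce_cons_eq {α : Type*} [DecidableEq α] (x hd : α × Bool) (tl L : List (α × Bool))
    (h : FreeGroup.reduce L = hd :: tl) :
    FreeGroup.reduce (x :: L)
      = if x.1 = hd.1 ∧ x.2 = !hd.2 then tl else x :: hd :: tl := by
  rw [FreeGroup.reduce.cons, h]

lemma reduce_cons_nil {α : Type*} [DecidableEq α] (x : α × Bool) (L : List (α × Bool))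
    (h : FreeGroup.reduce L = []) : FreeGroup.reduce (x :: L) = [x] := by
  rw [FreeGroup.reduce.cons, h]

lemma reduce_tail {α : Type*} [DecidableEq α] {x : α × Bool} {L : List (α × Bool)}
    (hL : FreeGroup.reduce (x :: L) = x :: L) : FreeGroup.reduce L = L := by
  rcases hr : FreeGroup.reduce L with _ | ⟨hd, tl⟩
  · rw [reduce_cons_nil x L hr] at hL
    simp at hL
    simp [hL]
  · rw [reduce_cons_eq x hd tl L hr] at hL
    by_cases hc : x.1 = hd.1 ∧ x.2 = !hd.2
    · rw [if_pos hc] at hL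
      have h1 : (FreeGroup.reduce L).length ≤ L.length := (FreeGroup.reduce.red).length_le
      rw [hr, hL] at h1
      simp at h1
    · rw [if_neg hc] at hL
      have := hL.symm
      rw [List.cons_eq_cons] at this
      exact this.2.symm

/-- no-cancellation lemma: if the head of reduced `u` can't cancel `(0,b)`, prepending
`(0,b)`s keeps everything. -/
lemma reduce_rep_append (b : Bool) (u : List (Fin 2 × Bool))
    (hu : FreeGroup.reduce u = u)
    (hh : ∀ x, u.head? = some x → ¬(x.1 = (0 : Fin 2) ∧ x.2 = !b)) :
    ∀ n : ℕ, FreeGroup.reduce (List.replicate n ((0 : Fin 2), b) ++ u)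
      = List.replicate n ((0 : Fin 2), b) ++ u := by
  intro n
  induction n with
  | zero => simpa using hu
  | succ n ih =>
    rw [List.replicate_succ, List.cons_append]
    cases n with
    | zero =>
      simp only [List.replicate, List.nil_append] at ih ⊢
      cases u with
      | nil => exact reduce_cons_nil _ _ rfl
      | cons y t =>
        rw [reduce_cons_eq _ y t _ ih, if_neg]
        have := hh y rfl
        rintro ⟨h1, h2⟩
        refine this ⟨h1.symm, ?_⟩
        have h2' : b = !y.2 := h2
        rw [h2']
        simp
    | succ m =>
      rw [show List.replicate (m + 1) ((0 : Fin 2), b) ++ u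
            = ((0 : Fin 2), b) :: (List.replicate m ((0 : Fin 2), b) ++ u) by
          rw [List.replicate_succ, List.cons_append]] at ih ⊢
      rw [reduce_cons_eq _ _ _ _ ih, if_neg (by simp)]

lemma head_reduce (b : Bool) (n : ℕ) (hn : 2 ≤ n) (u : List (Fin 2 × Bool))
    (hu : FreeGroup.reduce u = u)
    (hc : List.Chain' (fun a c : Fin 2 × Bool => ¬(a.1 = 0 ∧ c.1 = 0)) u) :
    (FreeGroup.reduce (List.replicate n ((0 : Fin 2), b) ++ u)).head?
      = some ((0 : Fin 2), b) := by
  by_cases hcan : ∃ u', u = ((0 : Fin 2), !b) :: u'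
  · obtain ⟨u', rfl⟩ := hcan
    -- one cancellation, then no more
    have hred : FreeGroup.Red (List.replicate n ((0 : Fin 2), b) ++ ((0, !b) :: u'))
        (List.replicate (n - 1) ((0 : Fin 2), b) ++ u') := by
      have : List.replicate n ((0 : Fin 2), b) ++ ((0, !b) :: u')
          = List.replicate (n - 1) ((0 : Fin 2), b) ++ ((0, b) :: (0, !b) :: u') := by
        conv_lhs => rw [show n = (n - 1) + 1 by omega]
        rw [List.replicate_succ']
        simp
      rw [this]
      exact Relation.ReflTransGen.single (FreeGroup.Red.Step.not)
    rw [FreeGroup.red.reduce_eq hred]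
    have hu' : FreeGroup.reduce u' = u' := reduce_tail hu
    have hh : ∀ x, u'.head? = some x → ¬(x.1 = (0 : Fin 2) ∧ x.2 = !b) := by
      intro x hx
      cases u' with
      | nil => simp at hx
      | cons y t =>
        simp at hx
        subst hx
        have := (List.isChain_cons_cons.mp hc).1
        intro hcon
        exact this ⟨rfl, hcon.1⟩
    rw [reduce_rep_append b u' hu' hh]
    rw [show n - 1 = (n - 2) + 1 by omega, List.replicate_succ]
    simp
  · have hh : ∀ x, u.head? = some x → ¬(x.1 = (0 : Fin 2) ∧ x.2 = !b) := by
      intro x hx hcon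
      cases u with
      | nil => simp at hx
      | cons y t =>
        simp at hx
        subst hx
        have hy : y = ((0 : Fin 2), !b) := Prod.ext hcon.1 hcon.2
        exact hcan ⟨t, by rw [hy]⟩
    rw [reduce_rep_append b u hu hh]
    rw [show n = (n - 1) + 1 by omega, List.replicate_succ]
    simp

/-- toWord of g^p -/
lemma toWord_gpow (p : ℤ) (hp : p ≠ 0) :
    (g ^ p).toWord = List.replicate p.natAbs ((0 : Fin 2), decide (0 < p)) := by
  rcases lt_or_gt_of_ne hp with hneg | hpos
  · have : g ^ p = (g ^ p.natAbs)⁻¹ := by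
      rw [← zpow_natCast, ← zpow_neg]
      congr 1
      omega
    rw [this, FreeGroup.toWord_inv, g, FreeGroup.toWord_of_pow, FreeGroup.invRev]
    have : decide (0 < p) = false := by simp; omega
    rw [this]
    simp [List.map_replicate, List.reverse_replicate]
  · have : g ^ p = g ^ p.natAbs := by rw [← zpow_natCast]; congr 1; omega
    rw [this, g, FreeGroup.toWord_of_pow]
    congr 1
    simp; omega

/-- the head version of the main statement -/
lemma head_version (u : F2)
    (hc : List.Chain' (fun a c : Fin 2 × Bool => ¬(a.1 = 0 ∧ c.1 = 0)) u.toWord)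
    (p : ℤ) (hp : 2 ≤ |p|) :
    (g ^ p * u).toWord.head? = some (0, decide (0 < p)) := by
  have hp0 : p ≠ 0 := by intro h; rw [h] at hp; simp at hp
  have h1 : g ^ p * u = FreeGroup.mk (List.replicate p.natAbs ((0 : Fin 2), decide (0 < p)) ++ u.toWord) := by
    rw [← FreeGroup.mul_mk, ← toWord_gpow p hp0, FreeGroup.mk_toWord, FreeGroup.mk_toWord]
  rw [h1, FreeGroup.toWord_mk]
  have h2 : 2 ≤ p.natAbs := by
    rw [Int.abs_eq_natAbs] at hp
    exact_mod_cast hp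
  exact head_reduce _ _ h2 _ (FreeGroup.reduce_toWord u) hc

/-- a word in which `g^{±1}` alternates with (nonzero) powers of `h`. -/
def AltGwithHpowers (w : F2) : Prop :=
  List.Chain' (fun a b : Fin 2 × Bool => ¬(a.1 = 0 ∧ b.1 = 0)) w.toWord

theorem stmt_19 (v : F2) (hv : AltGwithHpowers v) (p : ℤ) (hp : 2 ≤ |p|) :
    (v * g ^ p).toWord.getLast? = some (0, decide (0 < p)) ∧
      (g ^ p * v⁻¹).toWord.head? = some (0, decide (0 < p)) := by
  have hp0 : p ≠ 0 := by rintro rfl; simp at hp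
  have hcinv : List.Chain' (fun a b : Fin 2 × Bool => ¬(a.1 = 0 ∧ b.1 = 0)) (v⁻¹).toWord := by
    rw [FreeGroup.toWord_inv, FreeGroup.invRev, List.Chain', List.isChain_reverse, List.isChain_map]
    refine hv.imp ?_
    intro a b hab
    intro hcon
    exact hab ⟨hcon.2, hcon.1⟩
  constructor
  · have h1 : v * g ^ p = (g ^ (-p) * v⁻¹)⁻¹ := by
      rw [mul_inv_rev, inv_inv, zpow_neg, inv_inv]
    rw [h1, FreeGroup.toWord_inv, FreeGroup.invRev, List.getLast?_reverse, List.head?_map,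
      head_version v⁻¹ hcinv (-p) (by rwa [abs_neg])]
    simp only [Option.map_some]
    congr 2
    rcases lt_or_gt_of_ne hp0 with hneg | hpos
    · have h1 : (0:ℤ) < -p := by omega
      have h2 : ¬(0:ℤ) < p := by omega
      simp [h1, h2]; omega
    · have h1 : ¬(0:ℤ) < -p := by omega
      simp [h1, hpos]; omega
  · exact head_version v⁻¹ hcinv p hp

end Stmt19
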